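/- Let λ > 0, 0 < ℓ̲ ≤ ℓ̄ < ∞ and let d̄ ≥ 2 be an integer. Let Z be a random variable with values in [0,1] and (ζ, γ) a random pair independent of Z with, almost surely, 0 ≤ ζ ≤ 1 − 2/d̄ and e^{ℓ̲·√(2λ)} ≤ γ ≤ e^{ℓ̄·√(2λ)}, such that Φ_{(ζ,γ)}(Z) has the same distribution as Z. Then, almost surely, Z ≤ 1 / (1 + (2/d̄)·(e^{2ℓ̲√(2λ)} − 1)/(e^{2ℓ̄√(2λ)} + 1)); equivalently, the random variable ξ := 1/Z (with 1/0 := +∞) satisfies ξ ≥ 1 + (2/d̄)·(e^{2ℓ̲√(2λ)} − 1)/(e^{2ℓ̄√(2λ)} + 1) almost surely. -/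
import Mathlib


open MeasureTheory ProbabilityTheory Real

/-- The Möbius transform `Φ_{(ζ,γ)}(z) = (ζγ² + z)/(γ² + ζz)`. -/
noncomputable def Phi (ζ γ z : ℝ) : ℝ := (ζ * γ ^ 2 + z) / (γ ^ 2 + ζ * z)

lemma phi_key (a b t c ζ z : ℝ) (ha : 1 < a) (hat : a ≤ t) (htb : t ≤ b)
    (hζ : 0 ≤ ζ) (hζc : ζ ≤ 1 - c) (hc : 0 < c) (hz0 : 0 ≤ z) (hz1 : z ≤ 1) :
    (ζ * t + z) / (t + ζ * z) ≤ 1 / (1 + c * ((a - 1) / (b + 1))) := by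
  have ht1 : 1 < t := lt_of_lt_of_le ha hat
  have hb1 : (0:ℝ) < b + 1 := by linarith
  have hden : 0 < t + ζ * z := by nlinarith
  have hfr : 0 < (a - 1) / (b + 1) := div_pos (by linarith) hb1
  have hR : 0 < 1 + c * ((a - 1) / (b + 1)) := by nlinarith
  rw [div_le_div_iff₀ hden hR]
  have expand : (ζ * t + z) * (1 + c * ((a - 1) / (b + 1)))
      = ((ζ * t + z) * ((b + 1) + c * (a - 1))) / (b + 1) := by
    field_simp
  rw [expand, div_le_iff₀ hb1]
  have h1 : 0 ≤ (1 - ζ - c) * ((b + 1) * (t - z)) :=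
    mul_nonneg (by linarith) (mul_nonneg hb1.le (by linarith))
  have h2 : 0 ≤ c * ((b - t) * (t - z)) :=
    mul_nonneg hc.le (mul_nonneg (by linarith) (by linarith))
  have h3 : 0 ≤ c * ((t - a) * (ζ * t + z)) :=
    mul_nonneg hc.le (mul_nonneg (by linarith) (by nlinarith))
  have h4 : 0 ≤ c * (t * (1 - z)) :=
    mul_nonneg hc.le (mul_nonneg (by linarith) (by linarith))
  have h5 : 0 ≤ c * (t * ((t - 1) * (1 - ζ))) :=
    mul_nonneg hc.le (mul_nonneg (by linarith) (mul_nonneg (by linarith) (by linarith)))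
  nlinarith [h1, h2, h3, h4, h5]

/-- Let `λ > 0`, `0 < ℓ̲ ≤ ℓ̄`, `d̄ ≥ 2` an integer.  Let `Z` be `[0,1]`-valued and `(ζ, γ)`
independent of `Z` with a.s. `0 ≤ ζ ≤ 1 − 2/d̄` and `e^{ℓ̲√(2λ)} ≤ γ ≤ e^{ℓ̄√(2λ)}`, such
that `Φ_{(ζ,γ)}(Z)` has the same law as `Z`.  Then almost surely
`Z ≤ 1/(1 + (2/d̄)·(e^{2ℓ̲√(2λ)} − 1)/(e^{2ℓ̄√(2λ)} + 1))`. -/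
theorem stmt6 {Ω : Type*} [MeasurableSpace Ω] (μ : Measure Ω) [IsProbabilityMeasure μ]
    (lam llow lbar : ℝ) (dbar : ℕ)
    (hlam : 0 < lam) (hllow : 0 < llow) (hlord : llow ≤ lbar) (hdbar : 2 ≤ dbar)
    (Z ζ γ : Ω → ℝ)
    (hZmeas : Measurable Z) (hpairmeas : Measurable (fun ω => (ζ ω, γ ω)))
    (hZrange : ∀ᵐ ω ∂μ, Z ω ∈ Set.Icc (0 : ℝ) 1)
    (hζrange : ∀ᵐ ω ∂μ, 0 ≤ ζ ω ∧ ζ ω ≤ 1 - 2 / (dbar : ℝ))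
    (hγrange : ∀ᵐ ω ∂μ,
      exp (llow * Real.sqrt (2 * lam)) ≤ γ ω ∧ γ ω ≤ exp (lbar * Real.sqrt (2 * lam)))
    (hindep : IndepFun (fun ω => (ζ ω, γ ω)) Z μ)
    (hfix : Measure.map (fun ω => Phi (ζ ω) (γ ω) (Z ω)) μ = Measure.map Z μ) :
    ∀ᵐ ω ∂μ, Z ω ≤ 1 / (1 + (2 / (dbar : ℝ)) *
      ((exp (2 * llow * Real.sqrt (2 * lam)) - 1) /
        (exp (2 * lbar * Real.sqrt (2 * lam)) + 1))) := by
  set s : ℝ := Real.sqrt (2 * lam) with hs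
  have hspos : 0 < s := Real.sqrt_pos.mpr (by linarith)
  set M : ℝ := 1 / (1 + (2 / (dbar : ℝ)) *
      ((exp (2 * llow * s) - 1) / (exp (2 * lbar * s) + 1))) with hM
  have hdpos : (0:ℝ) < (dbar : ℝ) := by
    have : (2:ℝ) ≤ (dbar : ℝ) := by exact_mod_cast hdbar
    linarith
  have hc : (0:ℝ) < 2 / (dbar : ℝ) := by positivity
  have hA1 : 1 < exp (llow * s) := by
    have : Real.exp 0 < Real.exp (llow * s) :=
      Real.exp_lt_exp.mpr (mul_pos hllow hspos)
    simpa using this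
  have ha1 : 1 < exp (2 * llow * s) := by
    have : Real.exp 0 < Real.exp (2 * llow * s) := by
      apply Real.exp_lt_exp.mpr; nlinarith
    simpa using this
  have haA : exp (2 * llow * s) = (exp (llow * s)) ^ 2 := by
    rw [show 2 * llow * s = llow * s + llow * s by ring, Real.exp_add]; ring
  have hbB : exp (2 * lbar * s) = (exp (lbar * s)) ^ 2 := by
    rw [show 2 * lbar * s = lbar * s + lbar * s by ring, Real.exp_add]; ring
  -- pointwise bound almost surely
  have hPhile : ∀ᵐ ω ∂μ, Phi (ζ ω) (γ ω) (Z ω) ≤ M := by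
    filter_upwards [hZrange, hζrange, hγrange] with ω hZ hζω hγω
    have hγpos : 0 ≤ γ ω := le_trans (le_of_lt (by linarith : (0:ℝ) < exp (llow * s))) hγω.1
    have hat : exp (2 * llow * s) ≤ (γ ω) ^ 2 := by
      rw [haA]; exact pow_le_pow_left₀ (le_of_lt (by linarith)) hγω.1 2
    have htb : (γ ω) ^ 2 ≤ exp (2 * lbar * s) := by
      rw [hbB]; exact pow_le_pow_left₀ hγpos hγω.2 2
    have := phi_key (exp (2 * llow * s)) (exp (2 * lbar * s)) ((γ ω) ^ 2)
      (2 / (dbar : ℝ)) (ζ ω) (Z ω) ha1 hat htb hζω.1 hζω.2 hc hZ.1 hZ.2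
    simpa [Phi, hM] using this
  have hζm : Measurable ζ := measurable_fst.comp hpairmeas
  have hγm : Measurable γ := measurable_snd.comp hpairmeas
  have hmeasΦ : Measurable (fun ω => Phi (ζ ω) (γ ω) (Z ω)) := by
    unfold Phi
    exact ((hζm.mul (hγm.pow_const 2)).add hZmeas).div
      ((hγm.pow_const 2).add (hζm.mul hZmeas))
  have h0 : μ {ω | M < Phi (ζ ω) (γ ω) (Z ω)} = 0 := by
    have := ae_iff.mp hPhile
    simpa only [not_le] using this
  have h1 : μ {ω | M < Z ω} = 0 := by
    have e1 : μ.map Z (Set.Ioi M) = μ {ω | M < Z ω} := by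
      rw [Measure.map_apply hZmeas measurableSet_Ioi]; rfl
    have e2 : μ.map (fun ω => Phi (ζ ω) (γ ω) (Z ω)) (Set.Ioi M)
        = μ {ω | M < Phi (ζ ω) (γ ω) (Z ω)} := by
      rw [Measure.map_apply hmeasΦ measurableSet_Ioi]; rfl
    rw [← e1, ← hfix, e2, h0]
  refine ae_iff.mpr ?_
  simpa only [not_le] using h1
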